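/- The bilinear map μ₁((f,u),(g,v)) = ∫₀^{2π}∫₀^{2π} f·g_{xxx} dx dy is a 2-cocycle on the looped cotangent Virasoro algebra g̃: it is antisymmetric, μ₁((f,u),(g,v)) = −μ₁((g,v),(f,u)), and satisfies μ₁([a,b],c) + μ₁([b,c],a) + μ₁([c,a],b) = 0 for all a, b, c ∈ g̃. (This is the central extension of Virasoro type.) -/

import Mathlib

open Real intervalIntegral
open scoped ContDiff

noncomputable section

/-- Functions on `ℝ²` (representing functions on the 2-torus `S¹ × S¹`). -/
abbrev F2 : Type := ℝ × ℝ → ℂ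

/-- `C∞₂π(ℝ²,ℂ)`: smooth functions `ℝ² → ℂ` which are `2π`-periodic in each variable. -/
def SmoothPer2 (f : F2) : Prop :=
  ContDiff ℝ ∞ f ∧ (∀ p : ℝ × ℝ, f (p.1 + 2 * π, p.2) = f p)
    ∧ (∀ p : ℝ × ℝ, f (p.1, p.2 + 2 * π) = f p)

/-- Partial derivative in the first variable `x`. -/
def pdx (f : F2) : F2 := fun p => deriv (fun t => f (t, p.2)) p.1

/-- Partial derivative in the second variable `y`. -/
def pdy (f : F2) : F2 := fun p => deriv (fun t => f (p.1, t)) p.2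

/-- Double integral `∫₀^{2π}∫₀^{2π} f dx dy` over the torus. -/
def integ2 (f : F2) : ℂ := ∫ y in (0:ℝ)..(2 * π), ∫ x in (0:ℝ)..(2 * π), f (x, y)

/-- Membership in the looped cotangent Virasoro algebra `g̃`: a pair `(f,u)` of
functions in `C∞₂π(ℝ²,ℂ)`, `f` representing the loop of vector fields `f(x,y)·∂/∂x`
and `u` the loop of quadratic differentials `u(x,y)·dx²`. -/
def MemG (a : F2 × F2) : Prop := SmoothPer2 a.1 ∧ SmoothPer2 a.2

/-- The Lie bracket of the looped cotangent Virasoro algebra `g̃ = L(Vect(S¹) ⋉ F₂)`: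
`[(f,u),(g,v)] = (f·g_x − f_x·g, f·v_x + 2·f_x·v − g·u_x − 2·g_x·u)`. -/
def gBracket (a b : F2 × F2) : F2 × F2 :=
  (fun p => a.1 p * pdx b.1 p - pdx a.1 p * b.1 p,
   fun p => a.1 p * pdx b.2 p + 2 * pdx a.1 p * b.2 p
     - b.1 p * pdx a.2 p - 2 * pdx b.1 p * a.2 p)

/-- The Virasoro-type 2-cocycle `μ₁((f,u),(g,v)) = ∫₀^{2π}∫₀^{2π} f·g_{xxx} dx dy`
on the looped cotangent Virasoro algebra `g̃`. -/
def mu1 (a b : F2 × F2) : ℂ := integ2 (fun p => a.1 p * pdx (pdx (pdx b.1)) p)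

-- auxiliary lemmas
lemma one_le_inf : (1 : WithTop ℕ∞) ≤ ∞ := by exact_mod_cast le_top

lemma slice_contDiff {f : F2} (hf : ContDiff ℝ ∞ f) (y : ℝ) :
    ContDiff ℝ ∞ (fun t : ℝ => f (t, y)) :=
  hf.comp (contDiff_id.prodMk contDiff_const)

lemma pdx_eq_fderiv {f : F2} (hf : ContDiff ℝ ∞ f) :
    pdx f = fun p => fderiv ℝ f p (1, 0) := by
  funext p
  have h1 : HasDerivAt (fun t : ℝ => (t, p.2)) ((1 : ℝ), (0 : ℝ)) p.1 :=
    (hasDerivAt_id p.1).prodMk (hasDerivAt_const p.1 p.2)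
  have h2 : HasFDerivAt f (fderiv ℝ f p) p :=
    (hf.differentiable (by simp) p).hasFDerivAt
  exact (h2.comp_hasDerivAt p.1 h1).deriv

lemma smoothPer2_pdx {f : F2} (hf : SmoothPer2 f) : SmoothPer2 (pdx f) := by
  refine ⟨?_, ?_, ?_⟩
  · rw [pdx_eq_fderiv hf.1]
    exact (hf.1.fderiv_right (le_of_eq rfl)).clm_apply contDiff_const
  · intro p
    show deriv (fun t => f (t, p.2)) (p.1 + 2 * π) = deriv (fun t => f (t, p.2)) p.1
    have h : (fun t : ℝ => f (t + 2 * π, p.2)) = fun t => f (t, p.2) :=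
      funext fun t => hf.2.1 (t, p.2)
    rw [← deriv_comp_add_const (fun t => f (t, p.2)) (2 * π) p.1]
    exact congrFun (congrArg deriv h) p.1
  · intro p
    show deriv (fun t => f (t, p.2 + 2 * π)) p.1 = deriv (fun t => f (t, p.2)) p.1
    have h : (fun t : ℝ => f (t, p.2 + 2 * π)) = fun t => f (t, p.2) :=
      funext fun t => hf.2.2 (t, p.2)
    rw [h]

lemma smoothPer2_mul {f g : F2} (hf : SmoothPer2 f) (hg : SmoothPer2 g) :
    SmoothPer2 (fun p => f p * g p) :=
  ⟨hf.1.mul hg.1, fun p => by dsimp only; rw [hf.2.1 p, hg.2.1 p], fun p => by dsimp only; rw [hf.2.2 p, hg.2.2 p]⟩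

lemma smoothPer2_sub {f g : F2} (hf : SmoothPer2 f) (hg : SmoothPer2 g) :
    SmoothPer2 (fun p => f p - g p) :=
  ⟨hf.1.sub hg.1, fun p => by dsimp only; rw [hf.2.1 p, hg.2.1 p], fun p => by dsimp only; rw [hf.2.2 p, hg.2.2 p]⟩

lemma smoothPer2_add {f g : F2} (hf : SmoothPer2 f) (hg : SmoothPer2 g) :
    SmoothPer2 (fun p => f p + g p) :=
  ⟨hf.1.add hg.1, fun p => by dsimp only; rw [hf.2.1 p, hg.2.1 p], fun p => by dsimp only; rw [hf.2.2 p, hg.2.2 p]⟩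

lemma integral_pdx_zero {f : F2} (hf : SmoothPer2 f) (y : ℝ) :
    (∫ x in (0:ℝ)..(2 * π), pdx f (x, y)) = 0 := by
  have hs : ContDiff ℝ ∞ (fun t : ℝ => f (t, y)) := slice_contDiff hf.1 y
  have h1 : (∫ x in (0:ℝ)..(2 * π), deriv (fun t : ℝ => f (t, y)) x)
      = f (2 * π, y) - f (0, y) :=
    integral_deriv_eq_sub' (fun t : ℝ => f (t, y)) rfl
      (fun x _ => (hs.differentiable (by simp)).differentiableAt)
      ((contDiff_infty_iff_deriv.mp hs).2.continuous.continuousOn)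
  have h2 : f (2 * π, y) = f (0, y) := by
    have := hf.2.1 (0, y); simpa using this
  calc (∫ x in (0:ℝ)..(2 * π), pdx f (x, y))
      = ∫ x in (0:ℝ)..(2 * π), deriv (fun t : ℝ => f (t, y)) x := rfl
    _ = f (2 * π, y) - f (0, y) := h1
    _ = 0 := by rw [h2, sub_self]

lemma onevar_anti {F G : ℝ → ℂ} (hF : ContDiff ℝ ∞ F) (hG : ContDiff ℝ ∞ G) (x : ℝ) :
    deriv (fun t => F t * deriv (deriv G) t - deriv F t * deriv G t
        + deriv (deriv F) t * G t) x
      = F x * deriv (deriv (deriv G)) x + G x * deriv (deriv (deriv F)) x := by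
  have hF1 : ContDiff ℝ ∞ (deriv F) := (contDiff_infty_iff_deriv.mp hF).2
  have hF2 : ContDiff ℝ ∞ (deriv (deriv F)) := (contDiff_infty_iff_deriv.mp hF1).2
  have hG1 : ContDiff ℝ ∞ (deriv G) := (contDiff_infty_iff_deriv.mp hG).2
  have hG2 : ContDiff ℝ ∞ (deriv (deriv G)) := (contDiff_infty_iff_deriv.mp hG1).2
  have HF0 : HasDerivAt F (deriv F x) x :=
    ((contDiff_infty_iff_deriv.mp hF).1 x).hasDerivAt
  have HF1 : HasDerivAt (deriv F) (deriv (deriv F) x) x :=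
    ((contDiff_infty_iff_deriv.mp hF1).1 x).hasDerivAt
  have HF2 : HasDerivAt (deriv (deriv F)) (deriv (deriv (deriv F)) x) x :=
    ((contDiff_infty_iff_deriv.mp hF2).1 x).hasDerivAt
  have HG0 : HasDerivAt G (deriv G x) x :=
    ((contDiff_infty_iff_deriv.mp hG).1 x).hasDerivAt
  have HG1 : HasDerivAt (deriv G) (deriv (deriv G) x) x :=
    ((contDiff_infty_iff_deriv.mp hG1).1 x).hasDerivAt
  have HG2 : HasDerivAt (deriv (deriv G)) (deriv (deriv (deriv G)) x) x :=
    ((contDiff_infty_iff_deriv.mp hG2).1 x).hasDerivAt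
  have key := ((HF0.mul HG2).sub (HF1.mul HG1)).add (HF2.mul HG0)
  refine key.deriv.trans ?_; ring

lemma onevar_coc {F G H : ℝ → ℂ} (hF : ContDiff ℝ ∞ F) (hG : ContDiff ℝ ∞ G)
    (hH : ContDiff ℝ ∞ H) (x : ℝ) :
    deriv (fun t => F t * deriv G t * deriv (deriv H) t
        - F t * deriv (deriv G) t * deriv H t
        - deriv F t * G t * deriv (deriv H) t
        + deriv F t * deriv (deriv G) t * H t
        + deriv (deriv F) t * G t * deriv H t
        - deriv (deriv F) t * deriv G t * H t) x
      = (F x * deriv G x - deriv F x * G x) * deriv (deriv (deriv H)) x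
        + (G x * deriv H x - deriv G x * H x) * deriv (deriv (deriv F)) x
        + (H x * deriv F x - deriv H x * F x) * deriv (deriv (deriv G)) x := by
  have hF1 : ContDiff ℝ ∞ (deriv F) := (contDiff_infty_iff_deriv.mp hF).2
  have hF2 : ContDiff ℝ ∞ (deriv (deriv F)) := (contDiff_infty_iff_deriv.mp hF1).2
  have hG1 : ContDiff ℝ ∞ (deriv G) := (contDiff_infty_iff_deriv.mp hG).2
  have hG2 : ContDiff ℝ ∞ (deriv (deriv G)) := (contDiff_infty_iff_deriv.mp hG1).2
  have hH1 : ContDiff ℝ ∞ (deriv H) := (contDiff_infty_iff_deriv.mp hH).2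
  have hH2 : ContDiff ℝ ∞ (deriv (deriv H)) := (contDiff_infty_iff_deriv.mp hH1).2
  have HF0 : HasDerivAt F (deriv F x) x :=
    ((contDiff_infty_iff_deriv.mp hF).1 x).hasDerivAt
  have HF1 : HasDerivAt (deriv F) (deriv (deriv F) x) x :=
    ((contDiff_infty_iff_deriv.mp hF1).1 x).hasDerivAt
  have HF2 : HasDerivAt (deriv (deriv F)) (deriv (deriv (deriv F)) x) x :=
    ((contDiff_infty_iff_deriv.mp hF2).1 x).hasDerivAt
  have HG0 : HasDerivAt G (deriv G x) x :=
    ((contDiff_infty_iff_deriv.mp hG).1 x).hasDerivAt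
  have HG1 : HasDerivAt (deriv G) (deriv (deriv G) x) x :=
    ((contDiff_infty_iff_deriv.mp hG1).1 x).hasDerivAt
  have HG2 : HasDerivAt (deriv (deriv G)) (deriv (deriv (deriv G)) x) x :=
    ((contDiff_infty_iff_deriv.mp hG2).1 x).hasDerivAt
  have HH0 : HasDerivAt H (deriv H x) x :=
    ((contDiff_infty_iff_deriv.mp hH).1 x).hasDerivAt
  have HH1 : HasDerivAt (deriv H) (deriv (deriv H) x) x :=
    ((contDiff_infty_iff_deriv.mp hH1).1 x).hasDerivAt
  have HH2 : HasDerivAt (deriv (deriv H)) (deriv (deriv (deriv H)) x) x :=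
    ((contDiff_infty_iff_deriv.mp hH2).1 x).hasDerivAt
  have key := ((((((HF0.mul HG1).mul HH2).sub ((HF0.mul HG2).mul HH1)).sub
      ((HF1.mul HG0).mul HH2)).add ((HF1.mul HG2).mul HH0)).add
      ((HF2.mul HG0).mul HH1)).sub ((HF2.mul HG1).mul HH0)
  refine key.deriv.trans ?_; simp only [Pi.mul_apply]; ring

lemma sliceCont {I : F2} (hI : Continuous I) (y : ℝ) :
    Continuous fun x : ℝ => I (x, y) :=
  hI.comp (continuous_id.prodMk continuous_const)

lemma paramCont {I : F2} (hI : Continuous I) :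
    Continuous fun y : ℝ => ∫ x in (0:ℝ)..(2 * π), I (x, y) := by
  have hc : Continuous (Function.uncurry fun (y x : ℝ) => I (x, y)) :=
    hI.comp continuous_swap
  exact continuous_parametric_intervalIntegral_of_continuous' hc 0 (2 * π)

lemma integ2_pdx_zero {P : F2} (hP : SmoothPer2 P) : integ2 (pdx P) = 0 := by
  unfold integ2
  simp only [integral_pdx_zero hP]
  simp

lemma integ2_add2 {I J : F2} (hI : Continuous I) (hJ : Continuous J) :
    integ2 (fun p => I p + J p) = integ2 I + integ2 J := by
  have hIy : ∀ y : ℝ, IntervalIntegrable (fun x => I (x, y)) MeasureTheory.volume 0 (2 * π) :=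
    fun y => (sliceCont hI y).intervalIntegrable _ _
  have hJy : ∀ y : ℝ, IntervalIntegrable (fun x => J (x, y)) MeasureTheory.volume 0 (2 * π) :=
    fun y => (sliceCont hJ y).intervalIntegrable _ _
  have e1 : (fun y : ℝ => ∫ x in (0:ℝ)..(2 * π), (I (x, y) + J (x, y)))
      = fun y : ℝ => (∫ x in (0:ℝ)..(2 * π), I (x, y)) + ∫ x in (0:ℝ)..(2 * π), J (x, y) := by
    funext y
    exact intervalIntegral.integral_add (hIy y) (hJy y)
  show (∫ y in (0:ℝ)..(2 * π), ∫ x in (0:ℝ)..(2 * π), (I (x, y) + J (x, y))) = _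
  rw [e1]
  exact intervalIntegral.integral_add ((paramCont hI).intervalIntegrable _ _)
    ((paramCont hJ).intervalIntegrable _ _)

lemma integ2_add3 {I J K : F2} (hI : Continuous I) (hJ : Continuous J) (hK : Continuous K) :
    integ2 (fun p => I p + J p + K p) = integ2 I + integ2 J + integ2 K := by
  have h1 : integ2 (fun p => I p + J p + K p)
      = integ2 (fun p => I p + J p) + integ2 K := integ2_add2 (hI.add hJ) hK
  rw [h1, integ2_add2 hI hJ]

/-- **`μ₁` is a 2-cocycle on `g̃` (central extension of Virasoro type)**:
`μ₁((f,u),(g,v)) = ∫∫ f·g_{xxx} dx dy` is antisymmetric and satisfies the cocycle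
identity `μ₁([a,b],c) + μ₁([b,c],a) + μ₁([c,a],b) = 0` on `g̃`. -/
theorem mu1_is_two_cocycle :
    (∀ a b : F2 × F2, MemG a → MemG b → mu1 a b = - mu1 b a) ∧
    (∀ a b d : F2 × F2, MemG a → MemG b → MemG d →
      mu1 (gBracket a b) d + mu1 (gBracket b d) a + mu1 (gBracket d a) b = 0) := by
  constructor
  · intro a b ha hb
    have hf : SmoothPer2 a.1 := ha.1
    have hg : SmoothPer2 b.1 := hb.1
    rw [eq_neg_iff_add_eq_zero]
    have hf1 := smoothPer2_pdx hf
    have hf2 := smoothPer2_pdx hf1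
    have hf3 := smoothPer2_pdx hf2
    have hg1 := smoothPer2_pdx hg
    have hg2 := smoothPer2_pdx hg1
    have hg3 := smoothPer2_pdx hg2
    have hI : Continuous (fun p => a.1 p * pdx (pdx (pdx b.1)) p) :=
      hf.1.continuous.mul hg3.1.continuous
    have hJ : Continuous (fun p => b.1 p * pdx (pdx (pdx a.1)) p) :=
      hg.1.continuous.mul hf3.1.continuous
    have hP : SmoothPer2 (fun p => a.1 p * pdx (pdx b.1) p - pdx a.1 p * pdx b.1 p
        + pdx (pdx a.1) p * b.1 p) :=
      smoothPer2_add (smoothPer2_sub (smoothPer2_mul hf hg2) (smoothPer2_mul hf1 hg1))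
        (smoothPer2_mul hf2 hg)
    have hpt : (fun p : ℝ × ℝ => a.1 p * pdx (pdx (pdx b.1)) p + b.1 p * pdx (pdx (pdx a.1)) p)
        = pdx (fun p => a.1 p * pdx (pdx b.1) p - pdx a.1 p * pdx b.1 p
            + pdx (pdx a.1) p * b.1 p) := by
      funext p
      exact (onevar_anti (slice_contDiff hf.1 p.2) (slice_contDiff hg.1 p.2) p.1).symm
    show integ2 (fun p => a.1 p * pdx (pdx (pdx b.1)) p)
        + integ2 (fun p => b.1 p * pdx (pdx (pdx a.1)) p) = 0
    rw [← integ2_add2 hI hJ, hpt]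
    exact integ2_pdx_zero hP
  · intro a b d ha hb hd
    have hf : SmoothPer2 a.1 := ha.1
    have hg : SmoothPer2 b.1 := hb.1
    have hh : SmoothPer2 d.1 := hd.1
    have hf1 := smoothPer2_pdx hf
    have hf2 := smoothPer2_pdx hf1
    have hf3 := smoothPer2_pdx hf2
    have hg1 := smoothPer2_pdx hg
    have hg2 := smoothPer2_pdx hg1
    have hg3 := smoothPer2_pdx hg2
    have hh1 := smoothPer2_pdx hh
    have hh2 := smoothPer2_pdx hh1
    have hh3 := smoothPer2_pdx hh2
    have hI : Continuous (fun p => (a.1 p * pdx b.1 p - pdx a.1 p * b.1 p)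
        * pdx (pdx (pdx d.1)) p) :=
      ((hf.1.continuous.mul hg1.1.continuous).sub
        (hf1.1.continuous.mul hg.1.continuous)).mul hh3.1.continuous
    have hJ : Continuous (fun p => (b.1 p * pdx d.1 p - pdx b.1 p * d.1 p)
        * pdx (pdx (pdx a.1)) p) :=
      ((hg.1.continuous.mul hh1.1.continuous).sub
        (hg1.1.continuous.mul hh.1.continuous)).mul hf3.1.continuous
    have hK : Continuous (fun p => (d.1 p * pdx a.1 p - pdx d.1 p * a.1 p)
        * pdx (pdx (pdx b.1)) p) :=
      ((hh.1.continuous.mul hf1.1.continuous).sub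
        (hh1.1.continuous.mul hf.1.continuous)).mul hg3.1.continuous
    have hP : SmoothPer2 (fun p => a.1 p * pdx b.1 p * pdx (pdx d.1) p
        - a.1 p * pdx (pdx b.1) p * pdx d.1 p
        - pdx a.1 p * b.1 p * pdx (pdx d.1) p
        + pdx a.1 p * pdx (pdx b.1) p * d.1 p
        + pdx (pdx a.1) p * b.1 p * pdx d.1 p
        - pdx (pdx a.1) p * pdx b.1 p * d.1 p) :=
      smoothPer2_sub (smoothPer2_add (smoothPer2_add (smoothPer2_sub (smoothPer2_sub
        (smoothPer2_mul (smoothPer2_mul hf hg1) hh2)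
        (smoothPer2_mul (smoothPer2_mul hf hg2) hh1))
        (smoothPer2_mul (smoothPer2_mul hf1 hg) hh2))
        (smoothPer2_mul (smoothPer2_mul hf1 hg2) hh))
        (smoothPer2_mul (smoothPer2_mul hf2 hg) hh1))
        (smoothPer2_mul (smoothPer2_mul hf2 hg1) hh)
    have hpt : (fun p : ℝ × ℝ =>
          (a.1 p * pdx b.1 p - pdx a.1 p * b.1 p) * pdx (pdx (pdx d.1)) p
          + (b.1 p * pdx d.1 p - pdx b.1 p * d.1 p) * pdx (pdx (pdx a.1)) p
          + (d.1 p * pdx a.1 p - pdx d.1 p * a.1 p) * pdx (pdx (pdx b.1)) p)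
        = pdx (fun p => a.1 p * pdx b.1 p * pdx (pdx d.1) p
            - a.1 p * pdx (pdx b.1) p * pdx d.1 p
            - pdx a.1 p * b.1 p * pdx (pdx d.1) p
            + pdx a.1 p * pdx (pdx b.1) p * d.1 p
            + pdx (pdx a.1) p * b.1 p * pdx d.1 p
            - pdx (pdx a.1) p * pdx b.1 p * d.1 p) := by
      funext p
      exact (onevar_coc (slice_contDiff hf.1 p.2) (slice_contDiff hg.1 p.2)
        (slice_contDiff hh.1 p.2) p.1).symm
    show integ2 (fun p => (a.1 p * pdx b.1 p - pdx a.1 p * b.1 p) * pdx (pdx (pdx d.1)) p)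
        + integ2 (fun p => (b.1 p * pdx d.1 p - pdx b.1 p * d.1 p) * pdx (pdx (pdx a.1)) p)
        + integ2 (fun p => (d.1 p * pdx a.1 p - pdx d.1 p * a.1 p) * pdx (pdx (pdx b.1)) p) = 0
    rw [← integ2_add3 hI hJ hK, hpt]
    exact integ2_pdx_zero hP
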